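/- (Box product identity / GLW theorem) Let A ⊕ B = ℤ/Mℤ be a tiling of the cyclic group ℤ/Mℤ by finite sets A, B. For x, y ∈ ℤ/Mℤ and m ∣ M define 𝔸_m[x] = #{ a ∈ A : gcd(x - a, M) = m } and 𝔹_m[y] = #{ b ∈ B : gcd(y - b, M) = m }. Then for all x, y ∈ ℤ/Mℤ: ∑_{m ∣ M} 𝔸_m[x]·𝔹_m[y] / φ(M/m) = 1. -/

import Mathlib

def IsTiling {M : ℕ} (A B : Finset (ZMod M)) : Prop :=
  ∀ z : ZMod M, ∃! ab : ZMod M × ZMod M, ab.1 ∈ A ∧ ab.2 ∈ B ∧ ab.1 + ab.2 = z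

namespace BoxAux

variable {M : ℕ} (A B : Finset (ZMod M))

/-- number of pairs `(a,b) ∈ A × B` with `k•a + b = z` -/
def cnt (k : ℕ) (z : ZMod M) : ℕ :=
  ((A ×ˢ B).filter (fun ab => (k : ZMod M) * ab.1 + ab.2 = z)).card

lemma cnt_one (hT : IsTiling A B) (z : ZMod M) : cnt A B 1 z = 1 := by
  obtain ⟨ab, ⟨ha, hb, hs⟩, huniq⟩ := hT z
  rw [cnt, Finset.card_eq_one]
  refine ⟨ab, ?_⟩
  ext cd
  simp only [Finset.mem_filter, Finset.mem_product, Finset.mem_singleton, Nat.cast_one, one_mul]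
  constructor
  · rintro ⟨⟨h1, h2⟩, h3⟩; exact huniq cd ⟨h1, h2, h3⟩
  · rintro rfl; exact ⟨⟨ha, hb⟩, hs⟩

lemma card_AB [NeZero M] (hT : IsTiling A B) : (A ×ˢ B).card = M := by
  have key : (A ×ˢ B).card = (Finset.univ : Finset (ZMod M)).card := by
    apply Finset.card_bij (fun ab _ => ab.1 + ab.2)
    · intro ab _; exact Finset.mem_univ _
    · intro ab hab cd hcd h
      simp only [Finset.mem_product] at hab hcd
      obtain ⟨w, _, huniq⟩ := hT (ab.1 + ab.2)
      have h1 := huniq ab ⟨hab.1, hab.2, rfl⟩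
      have h2 := huniq cd ⟨hcd.1, hcd.2, h.symm⟩
      rw [h1, h2]
    · intro z _
      obtain ⟨ab, ⟨ha, hb, hs⟩, _⟩ := hT z
      exact ⟨ab, Finset.mem_product.mpr ⟨ha, hb⟩, hs⟩
  rw [key, Finset.card_univ, ZMod.card]

lemma sum_cnt [NeZero M] (k : ℕ) : ∑ z : ZMod M, cnt A B k z = (A ×ˢ B).card := by
  rw [Finset.card_eq_sum_card_fiberwise
    (f := fun ab => (k : ZMod M) * ab.1 + ab.2) (t := Finset.univ) (fun _ _ => Finset.mem_univ _)]
  rfl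

open AddMonoidAlgebra

variable [NeZero M]

/-- the "all ones" element -/
noncomputable def NN (R : Type) [CommSemiring R] : AddMonoidAlgebra R (ZMod M) :=
  ∑ w : ZMod M, AddMonoidAlgebra.single w 1

lemma NN_apply {R : Type} [CommSemiring R] (z : ZMod M) : (NN (M := M) R).coeff z = 1 := by
  rw [NN, AddMonoidAlgebra.coeff_sum, Finsupp.finset_sum_apply]
  simp_rw [AddMonoidAlgebra.coeff_single, Finsupp.single_apply]
  rw [Finset.sum_ite_eq']
  simp

lemma coeff_lemma {R : Type} [CommSemiring R] (k : ℕ) (z : ZMod M) :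
    (((∑ a ∈ A, AddMonoidAlgebra.single ((k : ZMod M) * a) (1 : R)) *
      (∑ b ∈ B, AddMonoidAlgebra.single b 1) : AddMonoidAlgebra R (ZMod M))).coeff z
      = (cnt A B k z : R) := by
  rw [Finset.sum_mul_sum]
  simp_rw [AddMonoidAlgebra.single_mul_single, mul_one]
  rw [← Finset.sum_product', cnt, AddMonoidAlgebra.coeff_sum, Finsupp.finset_sum_apply]
  simp_rw [AddMonoidAlgebra.coeff_single, Finsupp.single_apply]
  rw [Finset.sum_boole]

lemma single_mul_NN {R : Type} [CommSemiring R] (w : ZMod M) :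
    AddMonoidAlgebra.single w (1 : R) * NN R = NN R := by
  rw [NN, Finset.mul_sum]
  simp_rw [AddMonoidAlgebra.single_mul_single, one_mul]
  exact Fintype.sum_equiv (Equiv.addLeft w) _ _ (fun z => rfl)

lemma F_mul_NN {R : Type} [CommSemiring R] (k : ℕ) :
    (∑ a ∈ A, AddMonoidAlgebra.single ((k : ZMod M) * a) (1 : R)) * NN R = A.card • NN R := by
  rw [Finset.sum_mul]
  simp_rw [single_mul_NN]
  rw [Finset.sum_const]

lemma Fpow_mul_NN {R : Type} [CommSemiring R] (k n : ℕ) :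
    (∑ a ∈ A, AddMonoidAlgebra.single ((k : ZMod M) * a) (1 : R)) ^ n * NN R
      = (A.card ^ n) • NN R := by
  induction n with
  | zero => simp
  | succ n ih =>
      rw [pow_succ, mul_assoc, F_mul_NN, mul_smul_comm, ih, smul_smul, ← pow_succ']

lemma step (hT : IsTiling A B) (p k : ℕ) (hp : p.Prime) (hpM : ¬ p ∣ M)
    (hk : ∀ z, cnt A B k z = 1) : ∀ z, cnt A B (p * k) z = 1 := by
  haveI : Fact p.Prime := ⟨hp⟩
  haveI : CharP (AddMonoidAlgebra (ZMod p) (ZMod M)) p := by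
    apply charP_of_injective_ringHom
      (f := (AddMonoidAlgebra.singleZeroRingHom : ZMod p →+* AddMonoidAlgebra (ZMod p) (ZMod M)))
    intro r s h
    exact AddMonoidAlgebra.single_right_injective (m := (0 : ZMod M)) h
  set R := ZMod p
  set F : AddMonoidAlgebra R (ZMod M) := ∑ a ∈ A, AddMonoidAlgebra.single ((k : ZMod M) * a) 1
    with hF
  set G : AddMonoidAlgebra R (ZMod M) := ∑ b ∈ B, AddMonoidAlgebra.single b 1 with hG
  have hFG : F * G = NN R := by
    apply AddMonoidAlgebra.ext
    apply Finsupp.ext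
    intro z
    rw [hF, hG, coeff_lemma, hk z, NN_apply]
    simp
  have hFp : (∑ a ∈ A, AddMonoidAlgebra.single (((p * k : ℕ) : ZMod M) * a) (1 : R)) = F ^ p := by
    rw [hF, sum_pow_char]
    apply Finset.sum_congr rfl
    intro a _
    rw [AddMonoidAlgebra.single_pow, one_pow, nsmul_eq_mul]
    congr 1
    push_cast
    ring
  have hcard : ¬ (p ∣ A.card) := by
    intro h
    exact hpM (h.trans ⟨B.card, (card_AB A B hT).symm.trans (Finset.card_product A B)⟩)
  have key : ∀ z : ZMod M, ((cnt A B (p * k) z : R)) = 1 := by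
    intro z
    have h1 := coeff_lemma (R := R) A B (p * k) z
    rw [hFp] at h1
    have h2 : F ^ p * G = (A.card ^ (p - 1)) • NN R := by
      have : F ^ p = F ^ (p - 1) * F := by
        rw [← pow_succ, Nat.sub_add_cancel hp.one_le]
      rw [this, mul_assoc, hFG, Fpow_mul_NN]
    rw [h2] at h1
    rw [← h1, AddMonoidAlgebra.coeff_smul_apply, NN_apply, nsmul_eq_mul, mul_one]
    push_cast
    apply ZMod.pow_card_sub_one_eq_one
    rw [Ne, ZMod.natCast_eq_zero_iff]
    exact hcard
  have ge1 : ∀ z : ZMod M, 1 ≤ cnt A B (p * k) z := by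
    intro z
    rcases Nat.eq_zero_or_pos (cnt A B (p * k) z) with h | h
    · exfalso
      have := key z
      rw [h] at this
      simp at this
    · exact h
  intro z
  have hsum : ∑ w : ZMod M, cnt A B (p * k) w = ∑ _w : ZMod M, 1 := by
    rw [sum_cnt, card_AB A B hT, Finset.sum_const, Finset.card_univ, ZMod.card, smul_eq_mul,
      mul_one]
  exact ((Finset.sum_eq_sum_iff_of_le (fun i _ => ge1 i)).mp hsum.symm z (Finset.mem_univ z)).symm

lemma cnt_coprime (hT : IsTiling A B) :
    ∀ k : ℕ, Nat.Coprime k M → ∀ z : ZMod M, cnt A B k z = 1 := by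
  intro k
  induction k using Nat.strong_induction_on with
  | _ k ih =>
    intro hco z
    rcases Nat.lt_or_ge k 2 with hk2 | hk2
    · interval_cases k
      · -- k = 0 : coprime 0 M forces M = 1
        have hM1 : M = 1 := by simpa [Nat.coprime_zero_left] using hco
        subst hM1
        have : cnt A B 0 z = (A ×ˢ B).card := by
          rw [cnt]
          congr 1
          apply Finset.filter_true_of_mem
          intro ab _
          exact Subsingleton.elim _ _
        rw [this, card_AB A B hT]
      · exact cnt_one A B hT z
    · have hk1 : k ≠ 1 := by omega
      obtain ⟨p, hp, hpk⟩ := Nat.exists_prime_and_dvd hk1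
      obtain ⟨k', rfl⟩ := hpk
      have hpM : ¬ p ∣ M := by
        intro hdvd
        have : p ∣ Nat.gcd (p * k') M := Nat.dvd_gcd (Dvd.intro k' rfl) hdvd
        rw [hco] at this
        have h1 := Nat.le_of_dvd one_pos this
        have h2 := hp.one_lt
        omega
      have hk' : k' < p * k' := by
        have hk'0 : 0 < k' := by
          rcases Nat.eq_zero_or_pos k' with h | h
          · exfalso; subst h; simp at hk2
          · exact h
        have := hp.one_lt
        calc k' = 1 * k' := (one_mul k').symm
        _ < p * k' := by exact Nat.mul_lt_mul_of_lt_of_le this (le_refl k') hk'0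
      have hco' : Nat.Coprime k' M := Nat.Coprime.coprime_dvd_left (Dvd.intro_left p rfl) hco
      exact step A B hT p k' hp hpM (ih k' hk' hco') z

lemma gcd_neg (w : ZMod M) : Nat.gcd (-w).val M = Nat.gcd w.val M := by
  rw [ZMod.neg_val]
  split
  · rename_i h
    rw [h, ZMod.val_zero]
  · exact Nat.gcd_self_sub_left (le_of_lt (ZMod.val_lt w))

/-- number of units `r` with `r * u = v` -/
def nsol (u v : ZMod M) : ℕ :=
  (Finset.univ.filter (fun r : (ZMod M)ˣ => (r : ZMod M) * u = v)).card

lemma gcd_unit_mul (r : (ZMod M)ˣ) (u : ZMod M) :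
    Nat.gcd ((r : ZMod M) * u).val M = Nat.gcd u.val M := by
  have key : ∀ (s : (ZMod M)ˣ) (w : ZMod M),
      Nat.gcd w.val M ∣ Nat.gcd ((s : ZMod M) * w).val M := by
    intro s w
    apply Nat.dvd_gcd _ (Nat.gcd_dvd_right _ _)
    rw [ZMod.val_mul]
    exact (Nat.dvd_mod_iff (Nat.gcd_dvd_right _ _)).mpr
      (Dvd.dvd.mul_left (Nat.gcd_dvd_left _ _) _)
  apply Nat.dvd_antisymm
  · have h := key r⁻¹ ((r : ZMod M) * u)
    rwa [← mul_assoc, ← Units.val_mul, inv_mul_cancel, Units.val_one, one_mul] at h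
  · exact key r u

lemma exists_unit {u v : ZMod M} (h : Nat.gcd u.val M = Nat.gcd v.val M) :
    ∃ r : (ZMod M)ˣ, (r : ZMod M) * u = v := by
  have hM : 0 < M := NeZero.pos M
  set m := Nat.gcd u.val M with hm
  have hm0 : 0 < m := Nat.gcd_pos_of_pos_right _ hM
  have hmM : m ∣ M := Nat.gcd_dvd_right _ _
  set d := M / m with hd
  have hmd : m * d = M := Nat.mul_div_cancel' hmM
  have hd0 : 0 < d := by
    rcases Nat.eq_zero_or_pos d with h0 | h0
    · rw [h0, mul_zero] at hmd; omega
    · exact h0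
  haveI : NeZero d := ⟨hd0.ne'⟩
  have hdM : d ∣ M := Dvd.intro_left m hmd
  set s := u.val / m with hs
  set t := v.val / m with ht
  have hu : m * s = u.val := Nat.mul_div_cancel' (Nat.gcd_dvd_left _ _)
  have hv : m * t = v.val := Nat.mul_div_cancel' (h ▸ Nat.gcd_dvd_left v.val M)
  have hsd : Nat.Coprime s d := by
    have : m * Nat.gcd s d = m * 1 := by
      rw [mul_one, ← Nat.gcd_mul_left, hu, hmd, ← hm]
    exact Nat.eq_of_mul_eq_mul_left hm0 this
  have htd : Nat.Coprime t d := by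
    have : m * Nat.gcd t d = m * 1 := by
      rw [mul_one, ← Nat.gcd_mul_left, hv, hmd, h]
    exact Nat.eq_of_mul_eq_mul_left hm0 this
  have hsu : IsUnit (s : ZMod d) := (ZMod.isUnit_iff_coprime s d).mpr hsd
  have htu : IsUnit (t : ZMod d) := (ZMod.isUnit_iff_coprime t d).mpr htd
  obtain ⟨r, hr⟩ := ZMod.unitsMap_surjective hdM (htu.unit * hsu.unit⁻¹)
  refine ⟨r, ?_⟩
  have hcast : (ZMod.castHom hdM (ZMod d)) ((r : ZMod M))
      = ((htu.unit * hsu.unit⁻¹ : (ZMod d)ˣ) : ZMod d) :=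
    congrArg Units.val hr
  have hρs : ((htu.unit * hsu.unit⁻¹ : (ZMod d)ˣ) : ZMod d) * (s : ZMod d) = (t : ZMod d) := by
    rw [Units.val_mul, mul_assoc, IsUnit.val_inv_mul, mul_one, htu.unit_spec]
  have h1 : (((r : ZMod M).val * s : ℕ) : ZMod d) = ((t : ℕ) : ZMod d) := by
    push_cast
    rw [ZMod.natCast_val, ← ZMod.castHom_apply (h := hdM), hcast, hρs]
  have h2 := Nat.ModEq.mul_left' m ((ZMod.natCast_eq_natCast_iff _ _ _).mp h1)
  rw [hmd] at h2
  rw [show m * ((r : ZMod M).val * s) = (r : ZMod M).val * (m * s) by ring, hu, hv] at h2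
  have h3 := (ZMod.natCast_eq_natCast_iff _ _ _).mpr h2
  rw [Nat.cast_mul, ZMod.natCast_val, ZMod.cast_id, ZMod.natCast_val, ZMod.cast_id,
    ZMod.natCast_val, ZMod.cast_id] at h3
  exact h3

lemma card_gcd_eq {m : ℕ} (hmM : m ∣ M) (hm0 : 0 < m) :
    (Finset.univ.filter (fun v : ZMod M => Nat.gcd v.val M = m)).card = Nat.totient (M / m) := by
  have hM : 0 < M := NeZero.pos M
  have hmd : m * (M / m) = M := Nat.mul_div_cancel' hmM
  rw [Nat.totient_eq_card_coprime]
  apply Finset.card_bij' (i := fun v _ => v.val / m)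
    (j := fun t _ => ((m * t : ℕ) : ZMod M))
  · intro v hv
    simp only [Finset.mem_filter, Finset.mem_univ, true_and] at hv
    simp only [Finset.mem_filter, Finset.mem_range]
    have hdvd : m ∣ v.val := hv ▸ Nat.gcd_dvd_left _ _
    constructor
    · exact Nat.div_lt_div_of_lt_of_dvd hmM (ZMod.val_lt v)
    · have : m * Nat.gcd (M / m) (v.val / m) = m * 1 := by
        rw [mul_one, ← Nat.gcd_mul_left, hmd, Nat.mul_div_cancel' hdvd, Nat.gcd_comm, hv]
      exact Nat.eq_of_mul_eq_mul_left hm0 this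
  · intro t ht
    simp only [Finset.mem_filter, Finset.mem_range] at ht
    simp only [Finset.mem_filter, Finset.mem_univ, true_and]
    have hlt : m * t < M := by
      rw [← hmd]
      exact (mul_lt_mul_iff_right₀ hm0).mpr ht.1
    rw [ZMod.val_cast_of_lt hlt]
    have : Nat.gcd (m * t) M = m * Nat.gcd t (M / m) := by
      conv_lhs => rw [← hmd, Nat.gcd_mul_left]
    rw [this, Nat.gcd_comm t, ht.2, mul_one]
  · intro v hv
    simp only [Finset.mem_filter, Finset.mem_univ, true_and] at hv
    have hdvd : m ∣ v.val := hv ▸ Nat.gcd_dvd_left _ _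
    rw [Nat.mul_div_cancel' hdvd, ZMod.natCast_val, ZMod.cast_id]
  · intro t ht
    simp only [Finset.mem_filter, Finset.mem_range] at ht
    have hlt : m * t < M := by
      rw [← hmd]
      exact (mul_lt_mul_iff_right₀ hm0).mpr ht.1
    rw [ZMod.val_cast_of_lt hlt, Nat.mul_div_cancel_left t hm0]

lemma nsol_zero {u v : ZMod M} (h : Nat.gcd u.val M ≠ Nat.gcd v.val M) : nsol u v = 0 := by
  rw [nsol, Finset.card_eq_zero, Finset.filter_eq_empty_iff]
  intro r _
  intro hr
  exact h ((gcd_unit_mul r u).symm.trans (by rw [hr]))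

lemma sum_nsol (u : ZMod M) : ∑ v : ZMod M, nsol u v = Nat.totient M := by
  rw [← ZMod.card_units_eq_totient, ← Finset.card_univ,
    Finset.card_eq_sum_card_fiberwise (f := fun r : (ZMod M)ˣ => (r : ZMod M) * u)
      (t := Finset.univ) (fun _ _ => Finset.mem_univ _)]
  rfl

lemma nsol_const {u v v' : ZMod M} (h : Nat.gcd v.val M = Nat.gcd v'.val M) :
    nsol u v = nsol u v' := by
  obtain ⟨s, hs⟩ := exists_unit h
  rw [nsol, nsol]
  apply Finset.card_bij' (i := fun r _ => s * r) (j := fun r _ => s⁻¹ * r)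
  · intro r hr
    simp only [Finset.mem_filter, Finset.mem_univ, true_and] at hr ⊢
    rw [Units.val_mul, mul_assoc, hr, hs]
  · intro r hr
    simp only [Finset.mem_filter, Finset.mem_univ, true_and] at hr ⊢
    rw [Units.val_mul, mul_assoc, hr, ← hs, ← mul_assoc, ← Units.val_mul,
      inv_mul_cancel, Units.val_one, one_mul]
  · intro r _; rw [← mul_assoc, inv_mul_cancel, one_mul]
  · intro r _; rw [← mul_assoc, mul_inv_cancel, one_mul]

lemma nsol_eq {u v : ZMod M} {m : ℕ} (hu : Nat.gcd u.val M = m) (hv : Nat.gcd v.val M = m) :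
    nsol u v * Nat.totient (M / m) = Nat.totient M := by
  have hmM : m ∣ M := hu ▸ Nat.gcd_dvd_right u.val M
  have hm0 : 0 < m := hu ▸ Nat.gcd_pos_of_pos_right _ (NeZero.pos M)
  have step1 : ∑ w : ZMod M, nsol u w
      = ∑ w ∈ Finset.univ.filter (fun w : ZMod M => Nat.gcd w.val M = m), nsol u w := by
    symm
    apply Finset.sum_subset (Finset.filter_subset _ _)
    intro w _ hw
    simp only [Finset.mem_filter, Finset.mem_univ, true_and] at hw
    exact nsol_zero (fun hc => hw (hc ▸ hu ▸ rfl))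
  have step2 : ∑ w ∈ Finset.univ.filter (fun w : ZMod M => Nat.gcd w.val M = m), nsol u w
      = ∑ _w ∈ Finset.univ.filter (fun w : ZMod M => Nat.gcd w.val M = m), nsol u v := by
    apply Finset.sum_congr rfl
    intro w hw
    simp only [Finset.mem_filter, Finset.mem_univ, true_and] at hw
    exact nsol_const (hw.trans hv.symm)
  have := sum_nsol u
  rw [step1, step2, Finset.sum_const, smul_eq_mul, card_gcd_eq hmM hm0] at this
  rw [mul_comm]
  exact this

end BoxAux

open BoxAux in
theorem box_product_identity (M : ℕ) (hM : 0 < M)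
    (A B : Finset (ZMod M)) (hT : IsTiling A B) (x y : ZMod M) :
    ∑ m ∈ Nat.divisors M,
      ((A.filter (fun a => Nat.gcd (x - a).val M = m)).card *
        (B.filter (fun b => Nat.gcd (y - b).val M = m)).card : ℚ) /
        (Nat.totient (M / m) : ℚ) = 1 := by
  haveI : NeZero M := ⟨hM.ne'⟩
  set ns : ZMod M × ZMod M → ℕ := fun ab => nsol (x - ab.1) (ab.2 - y) with hns
  set ga : ZMod M × ZMod M → ℕ := fun ab => Nat.gcd (x - ab.1).val M with hga
  set gb : ZMod M × ZMod M → ℕ := fun ab => Nat.gcd (y - ab.2).val M with hgb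
  set Q : ℕ → Finset (ZMod M × ZMod M) :=
    fun m => (A ×ˢ B).filter (fun ab => ga ab = m ∧ gb ab = m) with hQ
  have hφM : (Nat.totient M : ℚ) ≠ 0 :=
    Nat.cast_ne_zero.mpr (Nat.totient_pos.mpr hM).ne'
  have hgb' : ∀ ab : ZMod M × ZMod M, Nat.gcd (ab.2 - y).val M = gb ab := by
    intro ab
    simp only [hgb]
    rw [← gcd_neg (y - ab.2), neg_sub]
  -- Step 1 : total count
  have step1 : ∑ ab ∈ A ×ˢ B, ns ab = Nat.totient M := by
    have expand : ∀ ab : ZMod M × ZMod M, ns ab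
        = ∑ r : (ZMod M)ˣ, if (r : ZMod M) * (x - ab.1) = ab.2 - y then 1 else 0 := by
      intro ab
      show (Finset.univ.filter
        (fun r : (ZMod M)ˣ => (r : ZMod M) * (x - ab.1) = ab.2 - y)).card = _
      rw [Finset.card_filter]
    simp_rw [expand]
    rw [Finset.sum_comm]
    have inner : ∀ r : (ZMod M)ˣ,
        (∑ ab ∈ A ×ˢ B, if (r : ZMod M) * (x - ab.1) = ab.2 - y then 1 else 0)
          = 1 := by
      intro r
      rw [Finset.sum_boole]
      have hfil : (A ×ˢ B).filter (fun ab => (r : ZMod M) * (x - ab.1) = ab.2 - y)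
          = (A ×ˢ B).filter
            (fun ab => (((r : ZMod M).val : ℕ) : ZMod M) * ab.1 + ab.2
              = (r : ZMod M) * x + y) := by
        apply Finset.filter_congr
        intro ab _
        rw [ZMod.natCast_val, ZMod.cast_id]
        constructor
        · intro h; linear_combination -h
        · intro h; linear_combination -h
      rw [hfil]
      have hc := cnt_coprime A B hT ((r : ZMod M).val)
        (ZMod.val_coe_unit_coprime r) ((r : ZMod M) * x + y)
      rw [cnt] at hc
      rw [hc]
      norm_num
    simp_rw [inner]
    rw [Finset.sum_const, Finset.card_univ, ZMod.card_units_eq_totient, smul_eq_mul, mul_one]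
  -- Step 2 : decomposition over divisors
  have step2 : ∑ m ∈ Nat.divisors M, ∑ ab ∈ Q m, ns ab = ∑ ab ∈ A ×ˢ B, ns ab := by
    have decomp : ∀ ab ∈ A ×ˢ B, ns ab
        = ∑ m ∈ Nat.divisors M, if ga ab = m ∧ gb ab = m then ns ab else 0 := by
      intro ab _
      by_cases h : ga ab = gb ab
      · have hiff : ∀ m : ℕ, (ga ab = m ∧ gb ab = m) ↔ ga ab = m := by
          intro m
          exact ⟨fun hc => hc.1, fun hc => ⟨hc, h ▸ hc⟩⟩
        have he : ∑ m ∈ Nat.divisors M, (if ga ab = m ∧ gb ab = m then ns ab else 0)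
            = ∑ m ∈ Nat.divisors M, (if ga ab = m then ns ab else 0) :=
          Finset.sum_congr rfl (fun m _ => if_congr (hiff m) rfl rfl)
        rw [he, Finset.sum_ite_eq, if_pos]
        rw [Nat.mem_divisors]
        exact ⟨Nat.gcd_dvd_right _ _, hM.ne'⟩
      · have hzero : ns ab = 0 := by
          apply nsol_zero
          rw [hgb' ab]
          intro hc
          exact h hc
        rw [hzero]
        refine (Finset.sum_eq_zero ?_).symm
        intro m _
        rw [if_neg]
        rintro ⟨h1, h2⟩
        exact h (h1.trans h2.symm)
    calc ∑ m ∈ Nat.divisors M, ∑ ab ∈ Q m, ns ab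
        = ∑ m ∈ Nat.divisors M, ∑ ab ∈ A ×ˢ B,
            (if ga ab = m ∧ gb ab = m then ns ab else 0) :=
          Finset.sum_congr rfl (fun m _ => Finset.sum_filter _ _)
      _ = ∑ ab ∈ A ×ˢ B, ∑ m ∈ Nat.divisors M,
            (if ga ab = m ∧ gb ab = m then ns ab else 0) := Finset.sum_comm
      _ = ∑ ab ∈ A ×ˢ B, ns ab :=
          Finset.sum_congr rfl (fun ab hab => (decomp ab hab).symm)
  -- Step 3
  have step3 : ∀ m ∈ Nat.divisors M, ∀ ab ∈ Q m,
      (ns ab : ℚ) / (Nat.totient M : ℚ) = 1 / (Nat.totient (M / m) : ℚ) := by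
    intro m hm ab hab
    rw [hQ] at hab
    rw [Finset.mem_filter] at hab
    obtain ⟨-, h1, h2⟩ := hab
    have hv : Nat.gcd (ab.2 - y).val M = m := by rw [hgb' ab]; exact h2
    have hkey : ns ab * Nat.totient (M / m) = Nat.totient M := nsol_eq h1 hv
    have hφm : (Nat.totient (M / m) : ℚ) ≠ 0 := by
      rw [Nat.mem_divisors] at hm
      have hd : 0 < M / m := Nat.div_pos (Nat.le_of_dvd hM hm.1)
        (Nat.pos_of_dvd_of_pos hm.1 hM)
      exact Nat.cast_ne_zero.mpr (Nat.totient_pos.mpr hd).ne'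
    rw [div_eq_div_iff hφM hφm, one_mul]
    exact_mod_cast congrArg (Nat.cast (R := ℚ)) hkey
  -- cards
  have hcardQ : ∀ m : ℕ,
      (A.filter (fun a => Nat.gcd (x - a).val M = m)).card *
        (B.filter (fun b => Nat.gcd (y - b).val M = m)).card = (Q m).card := by
    intro m
    simp only [hQ, hga, hgb]
    rw [Finset.filter_product (fun a => Nat.gcd (x - a).val M = m)
      (fun b => Nat.gcd (y - b).val M = m), Finset.card_product]
  have e1 : ∀ m ∈ Nat.divisors M,
      ((A.filter (fun a => Nat.gcd (x - a).val M = m)).card *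
        (B.filter (fun b => Nat.gcd (y - b).val M = m)).card : ℚ) /
        (Nat.totient (M / m) : ℚ)
      = ∑ ab ∈ Q m, (ns ab : ℚ) / (Nat.totient M : ℚ) := by
    intro m hm
    rw [← Nat.cast_mul, hcardQ m, Finset.sum_congr rfl (step3 m hm), Finset.sum_const,
      nsmul_eq_mul, mul_one_div]
  rw [Finset.sum_congr rfl e1]
  simp_rw [div_eq_mul_inv, ← Finset.sum_mul, ← Nat.cast_sum]
  rw [step2, step1, mul_inv_cancel₀ hφM]
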